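/- arXiv:2507.02722 — 3 statements merged into one kernel-verified Lean document; each statement's English description precedes it below -/
import Mathlib

section
/- Let $R$ be a commutative ring of prime characteristic $p$ and let $J \in M_n(R)$ be a matrix with $J^p = 0$. For $\lambda \in R$ define $E(\lambda) = \sum_{j=0}^{p-1} \binom{\lambda}{j} J^j$, where $\binom{\lambda}{j} = \lambda(\lambda-1)\cdots(\lambda-j+1)/j!$ is interpreted via the integer polynomial $\binom{X}{j}$ evaluated at $\lambda$. Then $E(\lambda)E(\mu) = E(\lambda + \mu)$ for all $\lambda, \mu \in R$, i.e., $E$ is a homomorphism from the additive group of $R$ to $GL_n(R)$. -/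
open Polynomial Finset

lemma smeval_int_eq {R : Type*} [CommRing R] (q : Polynomial ℤ) (r : R) :
    q.smeval r = (q.map (Int.castRingHom R)).eval r := by
  rw [smeval_eq_sum, eval_map, eval₂_eq_sum]
  refine Finset.sum_congr rfl fun k _ => ?_
  simp [Polynomial.smul_pow, zsmul_eq_mul]

lemma desc_bridge {R : Type*} [CommRing R] (k : ℕ) (r : R) :
    (descPochhammer ℤ k).smeval r = (descPochhammer R k).eval r := by
  rw [smeval_int_eq, descPochhammer_map]

lemma fact_unit (p : ℕ) (hp : p.Prime) (R : Type*) [CommRing R] [CharP R p]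
    {m : ℕ} (hm : m < p) : IsUnit ((m.factorial : R)) := by
  have hnd : ¬ p ∣ m.factorial := fun h =>
    absurd ((Nat.Prime.dvd_factorial hp).mp h) (by omega)
  have hcop : Nat.Coprime m.factorial p :=
    ((Nat.Prime.coprime_iff_not_dvd hp).mpr hnd).symm
  obtain ⟨a, b, hab⟩ := (Nat.isCoprime_iff_coprime).mpr hcop
  have h2 : (a : R) * (m.factorial : R) + (b : R) * (p : R) = 1 := by
    have := congrArg (fun z : ℤ => (z : R)) hab
    push_cast at this
    exact this
  rw [CharP.cast_eq_zero R p, mul_zero, add_zero] at h2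
  exact IsUnit.of_mul_eq_one _ (by rw [mul_comm]; exact h2)

lemma coeff_key (p : ℕ) (hp : p.Prime) (R : Type*) [CommRing R] [CharP R p]
    (lam mu : R) {m : ℕ} (hm : m < p) :
    Ring.inverse ((m.factorial : R)) * (descPochhammer R m).eval (lam + mu)
      = ∑ ij ∈ Finset.HasAntidiagonal.antidiagonal m,
        (Ring.inverse ((ij.1.factorial : R)) * (descPochhammer R ij.1).eval lam) *
        (Ring.inverse ((ij.2.factorial : R)) * (descPochhammer R ij.2).eval mu) := by
  have hu := fact_unit p hp R hm
  apply hu.mul_left_cancel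
  rw [← mul_assoc, Ring.mul_inverse_cancel _ hu, one_mul, Finset.mul_sum]
  rw [← desc_bridge, Ring.descPochhammer_smeval_add m (Commute.all lam mu)]
  refine Finset.sum_congr rfl fun ij hij => ?_
  have hijm : ij.1 + ij.2 = m := Finset.HasAntidiagonal.mem_antidiagonal.mp hij
  have hfac : m.choose ij.1 * ij.1.factorial * ij.2.factorial = m.factorial := by
    have := Nat.choose_mul_factorial_mul_factorial (show ij.1 ≤ m by omega)
    rwa [show m - ij.1 = ij.2 by omega] at this
  have hu1 := fact_unit p hp R (show ij.1 < p by omega)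
  have hu2 := fact_unit p hp R (show ij.2 < p by omega)
  have h1 : (ij.1.factorial : R) * Ring.inverse (ij.1.factorial : R) = 1 :=
    Ring.mul_inverse_cancel _ hu1
  have h2 : (ij.2.factorial : R) * Ring.inverse (ij.2.factorial : R) = 1 :=
    Ring.mul_inverse_cancel _ hu2
  simp only [desc_bridge]
  rw [← hfac]
  push_cast
  set X := (descPochhammer R ij.1).eval lam
  set Y := (descPochhammer R ij.2).eval mu
  set A := ((ij.1.factorial : ℕ) : R)
  set B := ((ij.2.factorial : ℕ) : R)
  set C := ((m.choose ij.1 : ℕ) : R)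
  linear_combination (-(C * X * Y * B * Ring.inverse B)) * h1 + (-(C * X * Y)) * h2


/-- For a matrix `J` with `J^p = 0` over a commutative ring of characteristic `p`, the map
`λ ↦ E(λ) = ∑_{j<p} binom(λ,j) J^j` (with `binom(λ,j) = λ(λ-1)⋯(λ-j+1)/j!`, the factorial
being invertible since `j < p`) is additive-to-multiplicative:
`E(λ)E(μ) = E(λ+μ)`. -/
theorem stmt5 (p : ℕ) (hp : p.Prime) (R : Type*) [CommRing R] [CharP R p]
    (n : Type*) [Fintype n] [DecidableEq n]
    (J : Matrix n n R) (hJ : J ^ p = 0) (lam mu : R) :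
    (∑ j ∈ Finset.range p,
        (Ring.inverse ((j.factorial : R)) * (descPochhammer R j).eval lam) • J ^ j) *
      (∑ j ∈ Finset.range p,
        (Ring.inverse ((j.factorial : R)) * (descPochhammer R j).eval mu) • J ^ j)
    = ∑ j ∈ Finset.range p,
        (Ring.inverse ((j.factorial : R)) * (descPochhammer R j).eval (lam + mu)) • J ^ j := by
  set c : R → ℕ → R := fun r j => Ring.inverse ((j.factorial : R)) * (descPochhammer R j).eval r with hc
  set g : ℕ × ℕ → Matrix n n R := fun ij => (c lam ij.1 * c mu ij.2) • J ^ (ij.1 + ij.2) with hg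
  have hzero : ∀ ij : ℕ × ℕ, p ≤ ij.1 + ij.2 → g ij = 0 := fun ij h => by
    simp only [hg, pow_eq_zero_of_le h hJ, smul_zero]
  have hbu : (Finset.range p).biUnion Finset.HasAntidiagonal.antidiagonal
      ⊆ Finset.range p ×ˢ Finset.range p := by
    intro ij hij
    simp only [Finset.mem_biUnion, Finset.mem_range, Finset.HasAntidiagonal.mem_antidiagonal] at hij
    obtain ⟨m, hm, hm2⟩ := hij
    simp only [Finset.mem_product, Finset.mem_range]
    omega
  calc (∑ j ∈ Finset.range p, c lam j • J ^ j) * (∑ j ∈ Finset.range p, c mu j • J ^ j)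
      = ∑ ij ∈ Finset.range p ×ˢ Finset.range p, g ij := by
        rw [Finset.sum_mul_sum, ← Finset.sum_product']
        exact Finset.sum_congr rfl fun ij _ => by
          simp only [hg, smul_mul_smul_comm, pow_add]
    _ = ∑ ij ∈ (Finset.range p).biUnion Finset.HasAntidiagonal.antidiagonal, g ij := by
        refine (Finset.sum_subset hbu fun ij hin hout => ?_).symm
        apply hzero
        simp only [Finset.mem_biUnion, Finset.mem_range, Finset.HasAntidiagonal.mem_antidiagonal] at hout
        by_contra h
        exact hout ⟨ij.1 + ij.2, by omega, rfl⟩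
    _ = ∑ m ∈ Finset.range p, ∑ ij ∈ Finset.HasAntidiagonal.antidiagonal m, g ij := by
        rw [Finset.sum_biUnion]
        intro a ha b hb hab
        exact Finset.disjoint_left.mpr fun ij h1 h2 => hab (by
          rw [← Finset.HasAntidiagonal.mem_antidiagonal.mp h1, ← Finset.HasAntidiagonal.mem_antidiagonal.mp h2])
    _ = ∑ j ∈ Finset.range p, c (lam + mu) j • J ^ j := by
        refine Finset.sum_congr rfl fun m hm => ?_
        simp only [hc]
        rw [coeff_key p hp R lam mu (Finset.mem_range.mp hm), Finset.sum_smul]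
        refine Finset.sum_congr rfl fun ij hij => ?_
        simp only [hg, hc, Finset.HasAntidiagonal.mem_antidiagonal.mp hij]
end

section
/- Let $G$ be a finite group, $k$ a field, and $W$ a finite-dimensional $kG$-module. Let $\mathcal{I}$ be a class of finite-dimensional $kG$-modules closed under direct sums, direct summands, and tensoring with arbitrary finite-dimensional modules. Let $\widetilde{\mathcal{T}}$ be the class of modules $X$ such that $W \otimes X \in \mathcal{I}$. If $W$ is self-dual (i.e., $W \cong W^*$), then $\widetilde{\mathcal{T}}$ is closed under tensor products: for $X, Y \in \widetilde{\mathcal{T}}$, also $X \otimes Y \in \widetilde{\mathcal{T}}$. -/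
open CategoryTheory MonoidalCategory Limits

noncomputable instance (k G : Type) [Field k] [Group G] :
    HasBinaryBiproducts (FDRep k G) :=
  HasBinaryBiproducts.of_hasBinaryProducts

/-- In a preadditive category with kernels and binary biproducts, a retract `A` of `M`
splits off as a direct summand: `M ≅ A ⊞ N` for some `N`. -/
noncomputable def retractBiprod {C : Type*} [Category C] [Preadditive C] [HasKernels C]
    [HasBinaryBiproducts C] {A M : C} (s : A ⟶ M) (r : M ⟶ A) (h : s ≫ r = 𝟙 A) :
    M ≅ A ⊞ kernel (r ≫ s) := by
  have : IsSplitMono s := IsSplitMono.mk' ⟨r, h⟩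
  set e : M ⟶ M := r ≫ s with he
  have hee : (𝟙 M - e) ≫ e = 0 := by
    simp [he, Preadditive.sub_comp, Category.assoc, reassoc_of% h]
  have hιr : kernel.ι e ≫ r = 0 := by
    have h1 : (kernel.ι e ≫ r) ≫ s = 0 := by
      rw [Category.assoc]; exact kernel.condition e
    exact (cancel_mono s).mp (by simpa using h1)
  let b : BinaryBicone A (kernel (r ≫ s)) :=
    { pt := M
      fst := r
      snd := kernel.lift e (𝟙 M - e) hee
      inl := s
      inr := kernel.ι e
      inl_fst := h
      inl_snd := by
        rw [← cancel_mono (kernel.ι e)]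
        simp [he, reassoc_of% h]
      inr_fst := hιr
      inr_snd := by
        rw [← cancel_mono (kernel.ι e)]
        have : kernel.ι e ≫ e = 0 := kernel.condition e
        simp [this]
      }
  have total : b.fst ≫ b.inl + b.snd ≫ b.inr = 𝟙 M := by
    simp [b, he]
  exact biprod.uniqueUpToIso _ _ (isBinaryBilimitOfTotal b total)

set_option maxHeartbeats 1000000 in
/-- If `W` is self-dual and `I` is a class of representations closed under direct sums,
direct summands and tensoring with arbitrary objects, then the class
`T̃ = {X : W ⊗ X ∈ I}` is closed under tensor products. -/
theorem stmt11 (k G : Type) [Field k] [Group G] [Fintype G]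
    (W : FDRep k G) (hW : Nonempty (W ≅ Wᘁ))
    (I : Set (FDRep k G))
    (hsum : ∀ X Y : FDRep k G, X ∈ I → Y ∈ I → (X ⊞ Y) ∈ I)
    (hsummand : ∀ X Y Z : FDRep k G, X ∈ I → Nonempty (X ≅ (Y ⊞ Z)) → Y ∈ I)
    (htensor : ∀ X : FDRep k G, X ∈ I → ∀ Y : FDRep k G, (X ⊗ Y) ∈ I)
    (X Y : FDRep k G) (hX : (W ⊗ X) ∈ I) (hY : (W ⊗ Y) ∈ I) :
    (W ⊗ (X ⊗ Y)) ∈ I := by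
  obtain ⟨φ⟩ := hW
  -- W is a retract of W ⊗ (W ⊗ W)
  let i₀ : W ⟶ W ⊗ (Wᘁ ⊗ W) :=
    (λ_ W).inv ≫ (η_ W Wᘁ ▷ W) ≫ (α_ W Wᘁ W).hom
  let p₀ : W ⊗ (Wᘁ ⊗ W) ⟶ W := (W ◁ ε_ W Wᘁ) ≫ (ρ_ W).hom
  have h₀ : i₀ ≫ p₀ = 𝟙 W := by
    simp only [i₀, p₀, Category.assoc, ExactPairing.evaluation_coevaluation_assoc,
      Iso.inv_hom_id_assoc, Iso.inv_hom_id]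
  let i₁ : W ⟶ W ⊗ (W ⊗ W) := i₀ ≫ (W ◁ (φ.inv ▷ W))
  let p₁ : W ⊗ (W ⊗ W) ⟶ W := (W ◁ (φ.hom ▷ W)) ≫ p₀
  have h₁ : i₁ ≫ p₁ = 𝟙 W := by
    simp only [i₁, p₁, Category.assoc]
    rw [← MonoidalCategory.whiskerLeft_comp_assoc, ← comp_whiskerRight, φ.inv_hom_id]
    simpa using h₀
  -- permutation iso (W ⊗ (W ⊗ W)) ⊗ (X ⊗ Y) ≅ (W ⊗ X) ⊗ ((W ⊗ Y) ⊗ W)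
  let σ : (W ⊗ (W ⊗ W)) ⊗ (X ⊗ Y) ≅ (W ⊗ X) ⊗ ((W ⊗ Y) ⊗ W) :=
    ⟨tensorμ W (W ⊗ W) X Y, tensorδ W (W ⊗ W) X Y,
      tensorμ_tensorδ W (W ⊗ W) X Y, tensorδ_tensorμ W (W ⊗ W) X Y⟩ ≪≫
      whiskerLeftIso (W ⊗ X) ((α_ W W Y) ≪≫ (β_ W (W ⊗ Y)))
  -- the retract of W ⊗ (X ⊗ Y) in M := (W ⊗ X) ⊗ ((W ⊗ Y) ⊗ W)
  let s : W ⊗ (X ⊗ Y) ⟶ (W ⊗ X) ⊗ ((W ⊗ Y) ⊗ W) := (i₁ ▷ (X ⊗ Y)) ≫ σ.hom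
  let r : (W ⊗ X) ⊗ ((W ⊗ Y) ⊗ W) ⟶ W ⊗ (X ⊗ Y) := σ.inv ≫ (p₁ ▷ (X ⊗ Y))
  have hsr : s ≫ r = 𝟙 (W ⊗ (X ⊗ Y)) := by
    simp only [s, r, Category.assoc, Iso.hom_inv_id_assoc]
    rw [← comp_whiskerRight, h₁, id_whiskerRight]
  have hM : ((W ⊗ X) ⊗ ((W ⊗ Y) ⊗ W)) ∈ I := htensor _ hX _
  exact hsummand _ _ _ hM ⟨retractBiprod s r hsr⟩
end

section
/- Let $k$ be an algebraically closed field of characteristic $3$, fix $\lambda \in k \setminus \mathbb{F}_3$, and set $\tilde{\lambda} = \lambda - \lambda^2$. For $\mu \in k$, let $S(\mu)$ be the $3$-dimensional module over $E = C_3^2$ (with $X_i = g_i - 1$) on which $X_1$ acts by the nilpotent Jordan block $\mathbb{J}$ (with $\mathbb{J}^3 = 0$) and $X_2$ acts by $\lambda \mathbb{J} + (\tilde{\lambda} + \mu)\mathbb{J}^2$. Then the dual module satisfies $S(\mu)^* \cong S(-\mu)$. -/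
open Matrix

noncomputable section

/-- The `3 × 3` nilpotent Jordan block (ones on the subdiagonal). -/
def Jmat (k : Type) [Field k] : Matrix (Fin 3) (Fin 3) k :=
  Matrix.of fun i j => if (i : ℕ) = (j : ℕ) + 1 then 1 else 0

/-- The matrices by which the generators `g₁, g₂` of `C₃²` act on `S(μ)`:
`g₁ ↦ 1 + J` and `g₂ ↦ 1 + λJ + (λ̃ + μ)J²` where `λ̃ = λ - λ²`. -/
def Smats (k : Type) [Field k] (lam mu : k) : Fin 2 → Matrix (Fin 3) (Fin 3) k :=
  ![1 + Jmat k, 1 + lam • Jmat k + (lam - lam ^ 2 + mu) • (Jmat k) ^ 2]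

lemma Smats0 (k : Type) [Field k] (lam mu : k) :
    Smats k lam mu 0 = !![1,0,0;(1:k),1,0;0,1,1] := by
  show 1 + Jmat k = _
  ext i j
  fin_cases i <;> fin_cases j <;>
    simp [Jmat, Matrix.one_apply, Matrix.vecHead, Matrix.vecTail]

lemma Smats1 (k : Type) [Field k] (lam mu : k) :
    Smats k lam mu 1 = !![1,0,0;lam,1,0;lam - lam^2 + mu,lam,1] := by
  show 1 + lam • Jmat k + (lam - lam ^ 2 + mu) • (Jmat k) ^ 2 = _
  rw [pow_two (Jmat k)]
  ext i j
  fin_cases i <;> fin_cases j <;>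
    simp [Jmat, Matrix.one_apply, Matrix.mul_apply, Fin.sum_univ_three,
      Matrix.vecHead, Matrix.vecTail]

lemma inv0 (k : Type) [Field k] (lam mu : k) :
    (Smats k lam mu 0)⁻¹ = !![1,0,0;(-1:k),1,0;1,-1,1] := by
  apply Matrix.inv_eq_right_inv
  rw [Smats0]
  ext i j
  fin_cases i <;> fin_cases j <;>
    simp [Matrix.one_apply, Matrix.mul_apply, Fin.sum_univ_three,
      Matrix.vecHead, Matrix.vecTail]

lemma inv1 (k : Type) [Field k] (lam mu : k) :
    (Smats k lam mu 1)⁻¹ = !![1,0,0;-lam,1,0;2*lam^2 - lam - mu,-lam,1] := by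
  apply Matrix.inv_eq_right_inv
  rw [Smats1]
  ext i j
  fin_cases i <;> fin_cases j <;>
    (simp [Matrix.one_apply, Matrix.mul_apply, Fin.sum_univ_three,
      Matrix.vecHead, Matrix.vecTail]; try ring)

/-- The dual of the `C₃²`-module `S(μ)` is isomorphic to `S(-μ)`: there is an invertible
matrix `P` intertwining the dual action (in which a generator `g` acts by the transpose of
the inverse of its action on `S(μ)`) with the action on `S(-μ)`. -/
theorem stmt14 (k : Type) [Field k] [IsAlgClosed k] [CharP k 3]
    (lam : k) (hlam : ∀ c : ZMod 3, (ZMod.castHom (dvd_refl 3) k) c ≠ lam) (mu : k) :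
    ∃ P : Matrix (Fin 3) (Fin 3) k, IsUnit P.det ∧
      ∀ i : Fin 2, P * ((Smats k lam mu i)⁻¹)ᵀ = Smats k lam (-mu) i * P := by
  have h3 : (3 : k) = 0 := by exact_mod_cast CharP.cast_eq_zero k 3
  refine ⟨!![0,0,-1;0,1,0;-1,-1,0], ?_, ?_⟩
  · rw [Matrix.det_fin_three]
    norm_num
    exact ⟨by change ¬(-1:k) = 0; norm_num, by change ¬(-1:k) = 0; norm_num⟩
  · rw [Fin.forall_fin_two]
    constructor
    · rw [inv0, Smats0]
      ext i j
      fin_cases i <;> fin_cases j <;>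
        (simp [Matrix.mul_apply, Fin.sum_univ_three, Matrix.transpose_apply,
          Matrix.vecHead, Matrix.vecTail]; try ring)
    · rw [inv1, Smats1]
      ext i j
      fin_cases i <;> fin_cases j <;>
        (simp [Matrix.mul_apply, Fin.sum_univ_three, Matrix.transpose_apply,
          Matrix.vecHead, Matrix.vecTail]; try linear_combination lam * h3 - lam^2 * h3)
end
end
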